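/- The Thomas–Fermi energy obeys the scaling law E_TF(Z) = E_TF(1) · Z^{7/3} for all Z > 0, where if ρ minimizes (or is admissible for) the functional at Z = 1, then ρ_Z(x) := Z² ρ(Z^{1/3} x) is admissible at Z and 𝓔_TF^Z(ρ_Z) = Z^{7/3} 𝓔_TF^1(ρ). -/

import Mathlib

open MeasureTheory

/-- The Coulomb scalar product `D(ρ,σ) = (1/2)∬ ρ(x)σ(y)|x−y|⁻¹ dx dy`. -/
noncomputable def coulombD (ρ σ : EuclideanSpace ℝ (Fin 3) → ℝ) : ℝ :=
  (1 / 2) * ∫ x, ∫ y, ρ x * σ y / ‖x - y‖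

/-- The Thomas–Fermi functional with coefficient `γ` and nuclear charge `Z`. -/
noncomputable def tfFunctional (γ Z : ℝ) (ρ : EuclideanSpace ℝ (Fin 3) → ℝ) : ℝ :=
  (∫ x, ((3 / 5) * γ * ρ x ^ ((5 : ℝ) / 3) - Z / ‖x‖ * ρ x)) + coulombD ρ ρ

/-- Admissible densities: nonnegative and in `L¹ ∩ L^{5/3}`. -/
def TFAdmissible (ρ : EuclideanSpace ℝ (Fin 3) → ℝ) : Prop :=
  (∀ x, 0 ≤ ρ x) ∧ Integrable ρ ∧ MemLp ρ (5 / 3)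

/-- The Thomas–Fermi ground-state energy. -/
noncomputable def tfEnergy (γ Z : ℝ) : ℝ :=
  sInf (tfFunctional γ Z '' {ρ | TFAdmissible ρ})

local notation "E3" => EuclideanSpace ℝ (Fin 3)

lemma integral_comp_smul3 (f : E3 → ℝ) {c : ℝ} (hc : 0 < c) :
    ∫ x : E3, f (c • x) = (c ^ 3)⁻¹ * ∫ x, f x := by
  rw [MeasureTheory.Measure.integral_comp_smul volume f c, finrank_euclideanSpace_fin,
    abs_of_pos (by positivity), smul_eq_mul]

lemma memLp_comp_smul {p : ENNReal} {f : E3 → ℝ} (hf : MemLp f p) {c : ℝ} (hc : c ≠ 0) :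
    MemLp (fun x => f (c • x)) p := by
  let t : E3 ≃ᵐ E3 := (Homeomorph.smul (isUnit_iff_ne_zero.2 hc).unit).toMeasurableEquiv
  have h1 : MemLp f p (Measure.map (c • ·) volume) := by
    rw [Measure.map_addHaar_smul volume hc]
    exact hf.smul_measure ENNReal.ofReal_ne_top
  exact (MeasurableEquiv.memLp_map_measure_iff t).1 h1

lemma tf_adm {Z : ℝ} (hZ : 0 < Z) {ρ : E3 → ℝ} (h : TFAdmissible ρ) :
    TFAdmissible (fun x => Z ^ 2 * ρ (Z ^ ((1 : ℝ) / 3) • x)) := by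
  obtain ⟨h0, h1, h2⟩ := h
  have hc : (Z ^ ((1:ℝ)/3)) ≠ 0 := (Real.rpow_pos_of_pos hZ _).ne'
  exact ⟨fun x => mul_nonneg (sq_nonneg Z) (h0 _), (h1.comp_smul hc).const_mul _,
    (memLp_comp_smul h2 hc).const_mul _⟩

lemma tf_scale (γ : ℝ) {Z : ℝ} (hZ : 0 < Z) (ρ : EuclideanSpace ℝ (Fin 3) → ℝ)
    (hρ : ∀ x, 0 ≤ ρ x) :
    tfFunctional γ Z (fun x => Z ^ 2 * ρ (Z ^ ((1 : ℝ) / 3) • x)) =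
      Z ^ ((7 : ℝ) / 3) * tfFunctional γ 1 ρ := by
  set c := Z ^ ((1:ℝ)/3) with hcdef
  have hc : 0 < c := Real.rpow_pos_of_pos hZ _
  have hZ0 : Z ≠ 0 := hZ.ne'
  have hc3 : c ^ 3 = Z := by
    rw [hcdef, ← Real.rpow_natCast (Z ^ ((1:ℝ)/3)) 3, ← Real.rpow_mul hZ.le]
    norm_num
  have hA : (Z ^ 2 : ℝ) ^ ((5:ℝ)/3) = Z ^ ((10:ℝ)/3) := by
    rw [← Real.rpow_natCast Z 2, ← Real.rpow_mul hZ.le]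
    norm_num
  have hB : Z ^ ((10:ℝ)/3) * c⁻¹ = Z * Z ^ 2 := by
    have e1 : Z * Z ^ 2 = Z ^ ((3:ℝ)) := by
      rw [show ((3:ℝ)) = ((3:ℕ):ℝ) by norm_num, Real.rpow_natCast]; ring
    rw [e1, hcdef, ← Real.rpow_neg hZ.le, ← Real.rpow_add hZ]
    norm_num
  have hZ73 : Z ^ ((7:ℝ)/3) = Z⁻¹ * Z ^ ((10:ℝ)/3) := by
    rw [← Real.rpow_neg_one Z, ← Real.rpow_add hZ]
    norm_num
  have hZ73c : Z ^ ((7:ℝ)/3) = Z ^ 2 * c := by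
    rw [hcdef, ← Real.rpow_natCast Z 2, ← Real.rpow_add hZ]
    norm_num
  have hnorm : ∀ x : EuclideanSpace ℝ (Fin 3), ‖c • x‖ = c * ‖x‖ := by
    intro x; rw [norm_smul, Real.norm_eq_abs, abs_of_pos hc]
  -- attraction + kinetic part
  have part1 : (∫ x : EuclideanSpace ℝ (Fin 3),
        ((3/5) * γ * (Z ^ 2 * ρ (c • x)) ^ ((5:ℝ)/3) - Z / ‖x‖ * (Z ^ 2 * ρ (c • x))))
      = Z ^ ((7:ℝ)/3) * ∫ x : EuclideanSpace ℝ (Fin 3),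
        ((3/5) * γ * ρ x ^ ((5:ℝ)/3) - 1 / ‖x‖ * ρ x) := by
    have key : (fun x : EuclideanSpace ℝ (Fin 3) =>
          (3/5) * γ * (Z ^ 2 * ρ (c • x)) ^ ((5:ℝ)/3) - Z / ‖x‖ * (Z ^ 2 * ρ (c • x)))
        = fun x : EuclideanSpace ℝ (Fin 3) =>
          (fun u => Z ^ ((10:ℝ)/3) * ((3/5) * γ * ρ u ^ ((5:ℝ)/3) - 1 / ‖u‖ * ρ u)) (c • x) := by
      funext x
      show _ = Z ^ ((10:ℝ)/3) * ((3/5) * γ * ρ (c • x) ^ ((5:ℝ)/3) - 1 / ‖c • x‖ * ρ (c • x))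
      rw [Real.mul_rpow (sq_nonneg Z) (hρ _), hA, hnorm x]
      linear_combination (ρ (c • x) / ‖x‖) * hB
    have hcomp := integral_comp_smul3
      (fun u => Z ^ ((10:ℝ)/3) * ((3/5) * γ * ρ u ^ ((5:ℝ)/3) - 1 / ‖u‖ * ρ u)) hc
    rw [key, hcomp, hc3, integral_const_mul, hZ73]
    ring
  -- Coulomb part
  have part2 : coulombD (fun x => Z ^ 2 * ρ (c • x)) (fun x => Z ^ 2 * ρ (c • x))
      = Z ^ ((7:ℝ)/3) * coulombD ρ ρ := by
    unfold coulombD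
    have inner : ∀ x : EuclideanSpace ℝ (Fin 3),
        (∫ y : EuclideanSpace ℝ (Fin 3), (Z ^ 2 * ρ (c • x)) * (Z ^ 2 * ρ (c • y)) / ‖x - y‖)
        = (c ^ 3)⁻¹ * ((Z ^ 2 * Z ^ 2 * c * ρ (c • x)) *
            ∫ v : EuclideanSpace ℝ (Fin 3), ρ v / ‖c • x - v‖) := by
      intro x
      have key : (fun y : EuclideanSpace ℝ (Fin 3) =>
            (Z ^ 2 * ρ (c • x)) * (Z ^ 2 * ρ (c • y)) / ‖x - y‖)
          = fun y : EuclideanSpace ℝ (Fin 3) =>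
            (fun v => (Z ^ 2 * Z ^ 2 * c * ρ (c • x)) * (ρ v / ‖c • x - v‖)) (c • y) := by
        funext y
        show _ = (Z ^ 2 * Z ^ 2 * c * ρ (c • x)) * (ρ (c • y) / ‖c • x - c • y‖)
        have hxy : ‖c • x - c • y‖ = c * ‖x - y‖ := by
          rw [← smul_sub, norm_smul, Real.norm_eq_abs, abs_of_pos hc]
        rw [hxy]
        have h1 : c * c⁻¹ = 1 := mul_inv_cancel₀ hc.ne'
        linear_combination (-(Z ^ 2 * ρ (c • x) * (Z ^ 2 * ρ (c • y)) / ‖x - y‖)) * h1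
      have hcomp := integral_comp_smul3
        (fun v => (Z ^ 2 * Z ^ 2 * c * ρ (c • x)) * (ρ v / ‖c • x - v‖)) hc
      rw [key, hcomp, integral_const_mul]
    have outer : (∫ x : EuclideanSpace ℝ (Fin 3), ∫ y : EuclideanSpace ℝ (Fin 3),
          (Z ^ 2 * ρ (c • x)) * (Z ^ 2 * ρ (c • y)) / ‖x - y‖)
        = (c ^ 3)⁻¹ * ((c ^ 3)⁻¹ * (Z ^ 2 * Z ^ 2 * c) *
            ∫ u : EuclideanSpace ℝ (Fin 3), ρ u * ∫ v : EuclideanSpace ℝ (Fin 3), ρ v / ‖u - v‖) := by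
      have key : (fun x : EuclideanSpace ℝ (Fin 3) => ∫ y : EuclideanSpace ℝ (Fin 3),
            (Z ^ 2 * ρ (c • x)) * (Z ^ 2 * ρ (c • y)) / ‖x - y‖)
          = fun x : EuclideanSpace ℝ (Fin 3) =>
            (fun u => ((c ^ 3)⁻¹ * (Z ^ 2 * Z ^ 2 * c)) *
              (ρ u * ∫ v : EuclideanSpace ℝ (Fin 3), ρ v / ‖u - v‖)) (c • x) := by
        funext x
        show _ = ((c ^ 3)⁻¹ * (Z ^ 2 * Z ^ 2 * c)) *
              (ρ (c • x) * ∫ v : EuclideanSpace ℝ (Fin 3), ρ v / ‖c • x - v‖)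
        rw [inner x]
        ring
      have hcomp := integral_comp_smul3
        (fun u => ((c ^ 3)⁻¹ * (Z ^ 2 * Z ^ 2 * c)) *
          (ρ u * ∫ v : EuclideanSpace ℝ (Fin 3), ρ v / ‖u - v‖)) hc
      rw [key, hcomp, integral_const_mul]
    have base : (∫ u : EuclideanSpace ℝ (Fin 3), ∫ v : EuclideanSpace ℝ (Fin 3), ρ u * ρ v / ‖u - v‖)
        = ∫ u : EuclideanSpace ℝ (Fin 3), ρ u * ∫ v : EuclideanSpace ℝ (Fin 3), ρ v / ‖u - v‖ := by
      congr 1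
      funext u
      rw [← integral_const_mul]
      congr 1
      funext v
      rw [mul_div_assoc]
    rw [outer, base, hc3, hZ73c]
    field_simp
  unfold tfFunctional
  rw [part1, part2]
  simp only [one_div]
  ring

open Pointwise
/-- Scaling law for the Thomas–Fermi energy: `E_TF(Z) = E_TF(1)·Z^{7/3}`, and for any
admissible `ρ` at `Z = 1`, the scaled density `ρ_Z(x) = Z²ρ(Z^{1/3}x)` is admissible and
`𝓔_TF^Z(ρ_Z) = Z^{7/3} 𝓔_TF^1(ρ)`. -/
theorem tf_energy_scaling (γ : ℝ) (hγ : 0 < γ) (Z : ℝ) (hZ : 0 < Z) :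
    tfEnergy γ Z = tfEnergy γ 1 * Z ^ ((7 : ℝ) / 3) ∧
    ∀ ρ : EuclideanSpace ℝ (Fin 3) → ℝ, TFAdmissible ρ →
      TFAdmissible (fun x => Z ^ 2 * ρ (Z ^ ((1 : ℝ) / 3) • x)) ∧
      tfFunctional γ Z (fun x => Z ^ 2 * ρ (Z ^ ((1 : ℝ) / 3) • x)) =
        Z ^ ((7 : ℝ) / 3) * tfFunctional γ 1 ρ := by
  refine ⟨?_, fun ρ hρ => ⟨tf_adm hZ hρ, tf_scale γ hZ ρ hρ.1⟩⟩
  have himg : tfFunctional γ Z '' {ρ | TFAdmissible ρ}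
      = (fun r => Z ^ ((7:ℝ)/3) * r) '' (tfFunctional γ 1 '' {ρ | TFAdmissible ρ}) := by
    ext r
    constructor
    · rintro ⟨ρ', hρ', rfl⟩
      set σ : EuclideanSpace ℝ (Fin 3) → ℝ :=
        fun x => Z⁻¹ ^ 2 * ρ' (Z⁻¹ ^ ((1:ℝ)/3) • x) with hσ
      have hσadm : TFAdmissible σ := tf_adm (inv_pos.2 hZ) hρ'
      refine ⟨tfFunctional γ 1 σ, ⟨σ, hσadm, rfl⟩, ?_⟩
      have h1 := tf_scale γ hZ σ hσadm.1
      have heq : (fun x => Z ^ 2 * σ (Z ^ ((1:ℝ)/3) • x)) = ρ' := by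
        funext x
        simp only [hσ, smul_smul]
        have h2 : Z⁻¹ ^ ((1:ℝ)/3) * Z ^ ((1:ℝ)/3) = 1 := by
          rw [Real.inv_rpow hZ.le, inv_mul_cancel₀ (Real.rpow_pos_of_pos hZ _).ne']
        have h3 : Z ^ 2 * Z⁻¹ ^ 2 = 1 := by field_simp
        rw [h2, one_smul, ← mul_assoc, h3, one_mul]
      rw [heq] at h1
      exact h1.symm
    · rintro ⟨r', ⟨ρ, hρ, rfl⟩, rfl⟩
      exact ⟨_, tf_adm hZ hρ, tf_scale γ hZ ρ hρ.1⟩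
  unfold tfEnergy
  rw [himg]
  have hset : (fun r => Z ^ ((7:ℝ)/3) * r) '' (tfFunctional γ 1 '' {ρ | TFAdmissible ρ})
      = Z ^ ((7:ℝ)/3) • (tfFunctional γ 1 '' {ρ | TFAdmissible ρ}) := by
    simp only [← smul_eq_mul]
    exact Set.image_smul
  rw [hset, Real.sInf_smul_of_nonneg (Real.rpow_nonneg hZ.le _), smul_eq_mul, mul_comm]
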